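/- Let X be a set, σ: X → X a map, and a, b: X → ℕ finitely supported functions with ‖a ∧ b‖₁ > 0. Then for every n ∈ ℕ, ‖s_n(a) − s_n(b)‖₁ / ‖s_n(a) ∧ s_n(b)‖₁ ≤ ‖a − b‖₁ / ‖a ∧ b‖₁, where s_n denotes the n-fold composite of s₁. -/

import Mathlib

/-- ℓ¹-norm of an ℕ-valued 0-chain: `‖a‖₁ = Σ_x a x`. -/
noncomputable def l1Norm {X : Type*} (a : X →₀ ℕ) : ℕ := a.sum fun _ n => n

/-- ℓ¹-distance `‖a - b‖₁ = Σ_x |a x - b x|` (with `|a x - b x|` computed via truncated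
subtraction on ℕ as `(a x - b x) + (b x - a x)`). -/
noncomputable def l1Dist {X : Type*} (a b : X →₀ ℕ) : ℕ := l1Norm ((a - b) + (b - a))

/-- `a ∧ b`: the pointwise minimum of two ℕ-valued 0-chains. -/
noncomputable def chainMin {X : Type*} (a b : X →₀ ℕ) : X →₀ ℕ :=
  Finsupp.zipWith min (min_self 0) a b

/-- `b(a)`: the characteristic function of the support of `a`. -/
noncomputable def bChain {X : Type*} (a : X →₀ ℕ) : X →₀ ℕ :=
  Finsupp.onFinset a.support (fun x => if a x = 0 then 0 else 1)
    (fun x h => Finsupp.mem_support_iff.mpr (by intro hx; simp [hx] at h))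

/-- `t(a) := a - b(a)`. -/
noncomputable def tChain {X : Type*} (a : X →₀ ℕ) : X →₀ ℕ := a - bChain a

/-- The flow map `s₁`: `s₁(a)(x) = b(a)(x) + Σ_{y : σ y = x} t(a)(y)`. -/
noncomputable def flowStep {X : Type*} (σ : X → X) (a : X →₀ ℕ) : X →₀ ℕ :=
  bChain a + (tChain a).sum fun y n => Finsupp.single (σ y) n

section Aux
variable {X : Type*}

lemma l1Norm_add (a b : X →₀ ℕ) : l1Norm (a + b) = l1Norm a + l1Norm b := by
  unfold l1Norm
  exact Finsupp.sum_add_index' (fun _ => rfl) (fun _ _ _ => rfl)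

lemma l1Norm_mono {a b : X →₀ ℕ} (h : a ≤ b) : l1Norm a ≤ l1Norm b := by
  have : a + (b - a) = b := add_tsub_cancel_of_le h
  calc l1Norm a ≤ l1Norm a + l1Norm (b - a) := Nat.le_add_right _ _
    _ = l1Norm (a + (b - a)) := (l1Norm_add _ _).symm
    _ = l1Norm b := by rw [this]

lemma bChain_apply (a : X →₀ ℕ) (x : X) : bChain a x = if a x = 0 then 0 else 1 := rfl

lemma bChain_le (a : X →₀ ℕ) : bChain a ≤ a := by
  intro x
  rw [bChain_apply]
  split <;> omega

lemma flowStep_eq (σ : X → X) (a : X →₀ ℕ) :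
    flowStep σ a = bChain a + Finsupp.mapDomain σ (tChain a) := rfl

lemma l1Norm_mapDomain (σ : X → X) (t : X →₀ ℕ) :
    l1Norm (Finsupp.mapDomain σ t) = l1Norm t := by
  unfold l1Norm
  rw [Finsupp.sum_mapDomain_index (fun _ => rfl) (fun _ _ _ => rfl)]

lemma l1Norm_flowStep (σ : X → X) (a : X →₀ ℕ) :
    l1Norm (flowStep σ a) = l1Norm a := by
  rw [flowStep_eq, l1Norm_add, l1Norm_mapDomain]
  have : bChain a + tChain a = a := add_tsub_cancel_of_le (bChain_le a)
  rw [← l1Norm_add, this]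

lemma flowStep_mono (σ : X → X) {a c : X →₀ ℕ} (h : a ≤ c) :
    flowStep σ a ≤ flowStep σ c := by
  have hb : bChain a ≤ bChain c := by
    intro x
    rw [bChain_apply, bChain_apply]
    have := h x
    split <;> split <;> omega
  have ht : tChain a ≤ tChain c := by
    intro x
    unfold tChain
    rw [Finsupp.tsub_apply, Finsupp.tsub_apply, bChain_apply, bChain_apply]
    have := h x
    split <;> split <;> omega
  have hm : Finsupp.mapDomain σ (tChain a) ≤ Finsupp.mapDomain σ (tChain c) := by
    have : tChain a + (tChain c - tChain a) = tChain c := add_tsub_cancel_of_le ht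
    calc Finsupp.mapDomain σ (tChain a)
        ≤ Finsupp.mapDomain σ (tChain a) + Finsupp.mapDomain σ (tChain c - tChain a) :=
          le_add_of_nonneg_right zero_le
      _ = Finsupp.mapDomain σ (tChain c) := by rw [← Finsupp.mapDomain_add, this]
  rw [flowStep_eq, flowStep_eq]
  exact add_le_add hb hm

lemma chainMin_apply (a b : X →₀ ℕ) (x : X) : chainMin a b x = min (a x) (b x) := rfl

lemma key_identity (a b : X →₀ ℕ) :
    l1Dist a b + 2 * l1Norm (chainMin a b) = l1Norm a + l1Norm b := by
  have hfin : ((a - b) + (b - a)) + (chainMin a b + chainMin a b) = a + b := by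
    ext x
    simp only [Finsupp.add_apply, Finsupp.tsub_apply, chainMin_apply]
    omega
  have := congrArg l1Norm hfin
  rw [l1Norm_add _ (chainMin a b + chainMin a b), l1Norm_add (chainMin a b),
    l1Norm_add a b] at this
  unfold l1Dist
  omega

lemma min_norm_le (σ : X → X) (a b : X →₀ ℕ) :
    l1Norm (chainMin a b) ≤ l1Norm (chainMin (flowStep σ a) (flowStep σ b)) := by
  have h1 : flowStep σ (chainMin a b) ≤ chainMin (flowStep σ a) (flowStep σ b) := by
    intro x
    rw [chainMin_apply]
    refine le_min ?_ ?_
    · exact flowStep_mono σ (fun y => by rw [chainMin_apply]; exact min_le_left _ _) x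
    · exact flowStep_mono σ (fun y => by rw [chainMin_apply]; exact min_le_right _ _) x
  calc l1Norm (chainMin a b) = l1Norm (flowStep σ (chainMin a b)) :=
        (l1Norm_flowStep σ _).symm
    _ ≤ _ := l1Norm_mono h1

end Aux

/-- The flow maps `s_n` (the `n`-fold composites of `s₁`) do not increase the ratio
`‖a - b‖₁ / ‖a ∧ b‖₁`, provided `‖a ∧ b‖₁ > 0`. -/
theorem flow_ratio_nonincreasing {X : Type*} (σ : X → X) (a b : X →₀ ℕ)
    (h : 0 < l1Norm (chainMin a b)) :
    ∀ n : ℕ,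
      (l1Dist ((flowStep σ)^[n] a) ((flowStep σ)^[n] b) : ℝ) /
          (l1Norm (chainMin ((flowStep σ)^[n] a) ((flowStep σ)^[n] b)) : ℝ) ≤
        (l1Dist a b : ℝ) / (l1Norm (chainMin a b) : ℝ) := by
  have main : ∀ n : ℕ,
      0 < l1Norm (chainMin ((flowStep σ)^[n] a) ((flowStep σ)^[n] b)) ∧
      l1Dist ((flowStep σ)^[n] a) ((flowStep σ)^[n] b) * l1Norm (chainMin a b) ≤
        l1Dist a b * l1Norm (chainMin ((flowStep σ)^[n] a) ((flowStep σ)^[n] b)) := by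
    intro n
    induction n with
    | zero => simp only [Function.iterate_zero, id_eq]; exact ⟨h, le_refl _⟩
    | succ n ih =>
      obtain ⟨hpos, hle⟩ := ih
      set A := (flowStep σ)^[n] a
      set B := (flowStep σ)^[n] b
      rw [Function.iterate_succ_apply', Function.iterate_succ_apply']
      have hm : l1Norm (chainMin A B) ≤ l1Norm (chainMin (flowStep σ A) (flowStep σ B)) :=
        min_norm_le σ A B
      have hid : l1Dist (flowStep σ A) (flowStep σ B)
            + 2 * l1Norm (chainMin (flowStep σ A) (flowStep σ B))
          = l1Dist A B + 2 * l1Norm (chainMin A B) := by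
        rw [key_identity, key_identity, l1Norm_flowStep, l1Norm_flowStep]
      refine ⟨lt_of_lt_of_le hpos hm, ?_⟩
      have hd : l1Dist (flowStep σ A) (flowStep σ B) ≤ l1Dist A B := by omega
      calc l1Dist (flowStep σ A) (flowStep σ B) * l1Norm (chainMin a b)
          ≤ l1Dist A B * l1Norm (chainMin a b) := Nat.mul_le_mul_right _ hd
        _ ≤ l1Dist a b * l1Norm (chainMin A B) := hle
        _ ≤ l1Dist a b * l1Norm (chainMin (flowStep σ A) (flowStep σ B)) :=
            Nat.mul_le_mul_left _ hm
  intro n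
  obtain ⟨hpos, hle⟩ := main n
  rw [div_le_div_iff₀ (by exact_mod_cast hpos) (by exact_mod_cast h)]
  exact_mod_cast hle
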